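/- Let 0 < α < 1, λ ∈ ℝ, τ > 0, and (v^k)_{k≥0} a real sequence with v^{-1} = 0. Then for every n ≥ 1: v^{n-1} · δ_t^{α,λ} v^n ≥ (1/2) e^{(1-α/2)λτ} δ_t^{α,2λ}(v^n)² − (e^{(1-α/2)λτ}/(2(l_0^α − l_1^α))) τ^α (δ_t^{α,λ} v^n)², where δ_t^{α,λ} and δ_t^{α,2λ} are defined as before and l_0^α − l_1^α = α > 0. -/

import Mathlib

noncomputable def binom (α : ℝ) (k : ℕ) : ℝ :=
  (∏ i ∈ Finset.range k, (α - i)) / (Nat.factorial k)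

noncomputable def g (α : ℝ) (k : ℕ) : ℝ := (-1) ^ k * binom α k

noncomputable def lcoef (α : ℝ) (n : ℕ) : ℝ := ∑ j ∈ Finset.range (n + 1), g α j

lemma prodneg (α : ℝ) (m : ℕ) :
    ∏ i ∈ Finset.range m, (α - 1 - i) = (-1)^m * ∏ i ∈ Finset.range m, (1 + i - α) := by
  rw [show ((-1:ℝ))^m = ∏ _i ∈ Finset.range m, (-1:ℝ) by simp, ← Finset.prod_mul_distrib]
  exact Finset.prod_congr rfl (by intros; ring)

lemma prodpos (α : ℝ) (hα1 : α < 1) (m : ℕ) : 0 ≤ ∏ i ∈ Finset.range m, (1 + (i:ℝ) - α) := by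
  apply Finset.prod_nonneg
  intro i _
  have : (0:ℝ) ≤ i := Nat.cast_nonneg i
  linarith

lemma shiftprod (α : ℝ) (k : ℕ) :
    ∏ i ∈ Finset.range (k+1), (α - i) = α * ∏ i ∈ Finset.range k, (α - 1 - i) := by
  rw [Finset.prod_range_succ' (fun i => α - (i:ℕ))]
  have : ∏ i ∈ Finset.range k, (α - ((i+1:ℕ):ℝ)) = ∏ i ∈ Finset.range k, (α - 1 - i) := by
    apply Finset.prod_congr rfl
    intros; push_cast; ring
  rw [this]
  push_cast
  ring

lemma pascal (α : ℝ) (k : ℕ) : binom α (k+1) = binom (α-1) (k+1) + binom (α-1) k := by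
  unfold binom
  rw [shiftprod, Finset.prod_range_succ (fun i => α - 1 - (i:ℕ))]
  have h2 : ((Nat.factorial (k+1)) : ℝ) = (k+1) * Nat.factorial k := by
    rw [Nat.factorial_succ]; push_cast; ring
  have h3 : ((Nat.factorial k) : ℝ) ≠ 0 := Nat.cast_ne_zero.2 (Nat.factorial_ne_zero k)
  rw [h2]
  field_simp
  ring

lemma g_zero (α : ℝ) : g α 0 = 1 := by simp [g, binom]

lemma g_one (α : ℝ) : g α 1 = -α := by
  simp [g, binom, Nat.factorial]

lemma lcoef_eq (α : ℝ) (n : ℕ) : lcoef α n = (-1)^n * binom (α-1) n := by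
  induction n with
  | zero => simp [lcoef, g_zero, binom]
  | succ m ih =>
      have : lcoef α (m+1) = lcoef α m + g α (m+1) := by
        rw [lcoef, Finset.sum_range_succ]; rfl
      rw [this, ih, g, pascal]
      ring

lemma lcoef_nonneg (α : ℝ) (hα1 : α < 1) (n : ℕ) : 0 ≤ lcoef α n := by
  rw [lcoef_eq]
  unfold binom
  rw [prodneg α n]
  have h : ((-1:ℝ))^n * ((-1)^n * (∏ i ∈ Finset.range n, (1 + (i:ℝ) - α)) / (Nat.factorial n)) =
      (∏ i ∈ Finset.range n, (1 + (i:ℝ) - α)) / (Nat.factorial n) := by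
    rw [← mul_div_assoc, ← mul_assoc, ← mul_pow]
    norm_num
  rw [h]
  exact div_nonneg (prodpos α hα1 n) (Nat.cast_nonneg _)

lemma g_nonpos (α : ℝ) (hα0 : 0 < α) (hα1 : α < 1) (k : ℕ) (hk : 1 ≤ k) : g α k ≤ 0 := by
  obtain ⟨m, rfl⟩ : ∃ m, k = m + 1 := ⟨k - 1, by omega⟩
  unfold g binom
  rw [shiftprod, prodneg]
  have hsign : ((-1:ℝ))^(m+1) * (α * ((-1)^m * ∏ i ∈ Finset.range m, (1 + (i:ℝ) - α)) / (Nat.factorial (m+1))) =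
      -(α * (∏ i ∈ Finset.range m, (1 + (i:ℝ) - α)) / (Nat.factorial (m+1))) := by
    have : ((-1:ℝ))^(m+1) * (-1)^m = -1 := by
      rw [← pow_add, show m+1+m = 2*m+1 by omega, pow_succ, pow_mul]
      norm_num
    linear_combination (α * (∏ i ∈ Finset.range m, (1 + (i:ℝ) - α)) / (Nat.factorial (m+1))) * this
  rw [hsign]
  have : 0 ≤ α * (∏ i ∈ Finset.range m, (1 + (i:ℝ) - α)) / (Nat.factorial (m+1)) :=
    div_nonneg (mul_nonneg hα0.le (prodpos α hα1 m)) (Nat.cast_nonneg _)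
  linarith

lemma core (α : ℝ) (hα0 : 0 < α) (hα1 : α < 1) (n : ℕ) (hn : 1 ≤ n) (x : ℕ → ℝ) :
    0 ≤ x 1 * (∑ k ∈ Finset.range (n+1), g α k * x k)
      - (∑ k ∈ Finset.range (n+1), g α k * (x k)^2) / 2
      + (∑ k ∈ Finset.range (n+1), g α k * x k)^2 / (2*α) := by
  set S := ∑ k ∈ Finset.range (n+1), g α k * x k with hS
  set S2 := ∑ k ∈ Finset.range (n+1), g α k * (x k)^2 with hS2
  have hL : 0 ≤ lcoef α n := lcoef_nonneg α hα1 n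
  have hsum : 2 * x 0 * S - S2 =
      lcoef α n * (x 0)^2 - ∑ k ∈ Finset.range (n+1), g α k * (x 0 - x k)^2 := by
    rw [hS, hS2, Finset.mul_sum, ← Finset.sum_sub_distrib, lcoef, Finset.sum_mul,
      ← Finset.sum_sub_distrib]
    exact Finset.sum_congr rfl (by intros; ring)
  have h1mem : (1:ℕ) ∈ Finset.range (n+1) := by
    simp only [Finset.mem_range]; omega
  have hbound : ∑ k ∈ Finset.range (n+1), g α k * (x 0 - x k)^2 ≤ -(α * (x 0 - x 1)^2) := by
    rw [← Finset.add_sum_erase _ _ h1mem, g_one]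
    have rest : ∑ k ∈ (Finset.range (n+1)).erase 1, g α k * (x 0 - x k)^2 ≤ 0 := by
      apply Finset.sum_nonpos
      intro k hk
      rcases Nat.eq_zero_or_pos k with h0 | h0
      · subst h0; simp [g_zero]
      · have : 1 ≤ k := h0
        exact mul_nonpos_of_nonpos_of_nonneg (g_nonpos α hα0 hα1 k this) (sq_nonneg _)
    nlinarith [rest]
  have h1 : α * (x 0 - x 1)^2 ≤ 2 * x 0 * S - S2 := by
    have hL2 : 0 ≤ lcoef α n * (x 0)^2 := mul_nonneg hL (sq_nonneg _)
    linarith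
  have h2 : 0 ≤ α * (x 0 - x 1)^2 - 2*(x 0 - x 1)*S + 2*(S^2/(2*α)) := by
    have key : α * (x 0 - x 1)^2 - 2*(x 0 - x 1)*S + 2*(S^2/(2*α)) =
        (α*(x 0 - x 1) - S)^2/α := by
      field_simp
      ring
    rw [key]
    positivity
  linarith

/-- `δ_t^{α,λ} v^n = τ^{-α} ∑_{k=0}^n e^{-(k-α/2)λτ} g_k^α v^{n-k}`. -/
noncomputable def delta (α lam τ : ℝ) (v : ℕ → ℝ) (n : ℕ) : ℝ :=
  τ ^ (-α) * ∑ k ∈ Finset.range (n + 1),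
    Real.exp (-((k : ℝ) - α / 2) * lam * τ) * g α k * v (n - k)

theorem stmt_13 (α lam τ : ℝ) (hα0 : 0 < α) (hα1 : α < 1) (hτ : 0 < τ)
    (v : ℕ → ℝ) (n : ℕ) (hn : 1 ≤ n) :
    v (n - 1) * delta α lam τ v n ≥
      (1 / 2) * Real.exp ((1 - α / 2) * lam * τ) *
          delta α (2 * lam) τ (fun k => (v k) ^ 2) n -
        (Real.exp ((1 - α / 2) * lam * τ) / (2 * (lcoef α 0 - lcoef α 1))) * τ ^ α *
          (delta α lam τ v n) ^ 2 := by
  have hα : α ≠ 0 := ne_of_gt hα0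
  set x : ℕ → ℝ := fun k => Real.exp (((n:ℝ) - (k:ℝ)) * (lam * τ)) * v (n - k) with hx
  set S := ∑ k ∈ Finset.range (n+1), g α k * x k with hS
  set S2 := ∑ k ∈ Finset.range (n+1), g α k * (x k)^2 with hS2
  have hA : delta α lam τ v n = τ^(-α) * (Real.exp ((α/2 - n)*(lam*τ)) * S) := by
    rw [delta, hS]
    simp only [Finset.mul_sum]
    apply Finset.sum_congr rfl
    intro k hk
    rw [show Real.exp (-((k:ℝ) - α / 2) * lam * τ)
        = Real.exp ((α/2 - n)*(lam*τ)) * Real.exp (((n:ℝ) - (k:ℝ))*(lam*τ)) by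
      rw [← Real.exp_add]; congr 1; ring]
    simp only [hx]
    ring
  have hB : delta α (2*lam) τ (fun k => (v k)^2) n
      = τ^(-α) * (Real.exp ((α/2 - n)*(2*(lam*τ))) * S2) := by
    rw [delta, hS2]
    simp only [Finset.mul_sum]
    apply Finset.sum_congr rfl
    intro k hk
    rw [show Real.exp (-((k:ℝ) - α / 2) * (2*lam) * τ)
        = Real.exp ((α/2 - n)*(2*(lam*τ))) * (Real.exp (((n:ℝ) - (k:ℝ))*(lam*τ)))^2 by
      rw [sq, ← Real.exp_add, ← Real.exp_add]; congr 1; ring]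
    simp only [hx]
    ring
  have hC : v (n-1) = Real.exp (-((n:ℝ)-1)*(lam*τ)) * x 1 := by
    simp only [hx]
    rw [← mul_assoc, ← Real.exp_add, Nat.cast_one,
      show -((n:ℝ)-1)*(lam*τ) + ((n:ℝ) - 1)*(lam*τ) = 0 by ring, Real.exp_zero, one_mul]
  have hl : lcoef α 0 - lcoef α 1 = α := by
    simp [lcoef, Finset.sum_range_succ, g_zero, g_one]
  have hcore := core α hα0 hα1 n hn x
  rw [← hS, ← hS2] at hcore
  set c := Real.exp ((1 + α/2 - 2*n)*(lam*τ)) with hc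
  have e1 : Real.exp (-((n:ℝ)-1)*(lam*τ)) * Real.exp ((α/2 - n)*(lam*τ)) = c := by
    rw [hc, ← Real.exp_add]; congr 1; ring
  have e2 : Real.exp ((1 - α/2) * lam * τ) * Real.exp ((α/2 - n)*(2*(lam*τ))) = c := by
    rw [hc, ← Real.exp_add]; congr 1; ring
  have e3 : Real.exp ((1 - α/2) * lam * τ) * (Real.exp ((α/2 - n)*(lam*τ)))^2 = c := by
    rw [hc, sq, ← Real.exp_add, ← Real.exp_add]; congr 1; ring
  have e4 : τ^α * τ^(-α) = 1 := by
    rw [← Real.rpow_add hτ]; norm_num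
  rw [hA, hB, hC, hl]
  have final : Real.exp (-((n:ℝ)-1)*(lam*τ)) * x 1 * (τ^(-α) * (Real.exp ((α/2 - n)*(lam*τ)) * S))
      - ((1/2) * Real.exp ((1 - α/2) * lam * τ) * (τ^(-α) * (Real.exp ((α/2 - n)*(2*(lam*τ))) * S2))
        - Real.exp ((1 - α/2) * lam * τ) / (2*α) * τ^α * (τ^(-α) * (Real.exp ((α/2 - n)*(lam*τ)) * S))^2)
      = τ^(-α) * (c * (x 1 * S - S2/2 + S^2/(2*α))) := by
    linear_combination (τ^(-α) * x 1 * S) * e1 - (τ^(-α) * S2 / 2) * e2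
      + (S^2/(2*α)) * (τ^α * (τ^(-α))^2 * e3 + c * τ^(-α) * e4)
  have hτpos : (0:ℝ) < τ^(-α) := Real.rpow_pos_of_pos hτ _
  have hfac : 0 ≤ τ^(-α) * (c * (x 1 * S - S2/2 + S^2/(2*α))) :=
    mul_nonneg hτpos.le (mul_nonneg (Real.exp_pos _).le hcore)
  linarith [final, hfac]
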